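/- arXiv:2203.02791 — 2 statements merged into one kernel-verified Lean document; each statement's English description precedes it below -/
import Mathlib

section
/- If x₁, x₂, ..., x_N are independent exponentially distributed random variables with rates λ₁, ..., λ_N (all positive), then Pr(x₁ ≤ x₂ + ... + x_N) = 1 - ∏_{i=2}^{N} 1/(1 + λ₁/λᵢ). -/
open MeasureTheory ProbabilityTheory Finset

open Real Set in
lemma expMeasure_apply_Iio_zero {r : ℝ} : expMeasure r (Iio 0) = 0 := by
  rw [expMeasure, gammaMeasure, withDensity_apply _ measurableSet_Iio]
  exact lintegral_gammaPDF_of_nonpos le_rfl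

open Real Set in
lemma map_expMeasure_nonneg {Ω : Type*} [MeasurableSpace Ω] (μ : Measure Ω)
    (f : Ω → ℝ) (hf : Measurable f) {r : ℝ} (h : μ.map f = expMeasure r) :
    ∀ᵐ ω ∂μ, 0 ≤ f ω := by
  have h0 : μ (f ⁻¹' Iio 0) = 0 := by
    rw [← Measure.map_apply hf measurableSet_Iio, h]
    exact expMeasure_apply_Iio_zero
  rw [ae_iff]
  convert h0 using 2
  ext ω
  simp [not_le]

open Real Set in
lemma expMeasure_apply_Iic {r : ℝ} (hr : 0 < r) {b : ℝ} (hb : 0 ≤ b) :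
    expMeasure r (Iic b) = ENNReal.ofReal (1 - exp (-(r * b))) := by
  rw [expMeasure, gammaMeasure, withDensity_apply _ measurableSet_Iic]
  have hpdf : gammaPDF 1 r = exponentialPDF r := rfl
  rw [hpdf, lintegral_exponentialPDF_eq_antiDeriv hr b, if_pos hb]

open Real Set in
lemma integral_exp_expMeasure {r c : ℝ} (hr : 0 < r) (hc : 0 < c) :
    ∫ y, exp (-(c * y)) ∂(expMeasure r) = r / (r + c) := by
  have hrc : 0 < r + c := by linarith
  have hcont : Continuous fun y : ℝ => exp (-(c * y)) := by fun_prop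
  have hnn : 0 ≤ᵐ[expMeasure r] fun y => exp (-(c * y)) :=
    ae_of_all _ fun y => (exp_pos _).le
  rw [integral_eq_lintegral_of_nonneg_ae hnn hcont.aestronglyMeasurable]
  have hmeasf : Measurable fun y : ℝ => ENNReal.ofReal (exp (-(c * y))) :=
    ENNReal.measurable_ofReal.comp (by fun_prop)
  have hmeaspdf : Measurable (gammaPDF 1 r) :=
    ENNReal.measurable_ofReal.comp (measurable_gammaPDFReal 1 r)
  have hwd : ∫⁻ y, ENNReal.ofReal (exp (-(c * y))) ∂(expMeasure r)
      = ∫⁻ y, exponentialPDF r y * ENNReal.ofReal (exp (-(c * y))) := by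
    rw [expMeasure, gammaMeasure,
      lintegral_withDensity_eq_lintegral_mul _ hmeaspdf hmeasf]
    exact lintegral_congr fun y => rfl
  rw [hwd]
  have hsplit : ∫⁻ y, exponentialPDF r y * ENNReal.ofReal (exp (-(c * y)))
      = (∫⁻ y in Iio 0, exponentialPDF r y * ENNReal.ofReal (exp (-(c * y))))
        + ∫⁻ y in Ici 0, exponentialPDF r y * ENNReal.ofReal (exp (-(c * y))) := by
    rw [← lintegral_add_compl _ measurableSet_Iio (μ := volume), compl_Iio]
  rw [hsplit]
  have h1 : ∫⁻ y in Iio 0, exponentialPDF r y * ENNReal.ofReal (exp (-(c * y))) = 0 := by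
    rw [setLIntegral_congr_fun measurableSet_Iio
      (fun y (hy : y < 0) => by
        rw [exponentialPDF_of_neg hy, zero_mul])]
    simp
  have h2 : ∫⁻ y in Ici 0, exponentialPDF r y * ENNReal.ofReal (exp (-(c * y)))
      = ∫⁻ y in Ici 0, ENNReal.ofReal (r * exp (-((r + c) * y))) := by
    refine setLIntegral_congr_fun measurableSet_Ici (fun y (hy : 0 ≤ y) => ?_)
    rw [exponentialPDF_of_nonneg hy, ← ENNReal.ofReal_mul (by positivity)]
    congr 1
    rw [mul_assoc, ← exp_add]
    ring_nf
  have hint : IntegrableOn (fun y => r * exp (-((r + c) * y))) (Ici 0) := by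
    rw [integrableOn_Ici_iff_integrableOn_Ioi]
    refine Integrable.const_mul ?_ r
    have heq : (fun y : ℝ => exp (-((r + c) * y))) = fun y : ℝ => exp (-(r + c) * y) := by
      funext y; ring_nf
    rw [heq]
    exact exp_neg_integrableOn_Ioi 0 hrc
  have h3 : ∫⁻ y in Ici 0, ENNReal.ofReal (r * exp (-((r + c) * y)))
      = ENNReal.ofReal (∫ y in Ici 0, r * exp (-((r + c) * y))) := by
    rw [← ofReal_integral_eq_lintegral_ofReal hint
      (ae_of_all _ fun y => by positivity)]
  have h4 : ∫ y in Ici 0, r * exp (-((r + c) * y)) = r / (r + c) := by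
    rw [integral_Ici_eq_integral_Ioi, MeasureTheory.integral_const_mul]
    have := integral_comp_mul_left_Ioi (fun y => exp (-y)) 0 hrc
    simp only [mul_zero] at this
    rw [show (fun y : ℝ => exp (-((r + c) * y))) = fun y : ℝ => exp (-((r+c) * y)) from rfl]
    calc r * ∫ y in Ioi (0:ℝ), exp (-((r + c) * y))
        = r * ((r + c)⁻¹ • ∫ y in Ioi (0:ℝ), exp (-y)) := by rw [this]
      _ = r / (r + c) := by
          rw [integral_exp_neg_Ioi_zero]
          simp [smul_eq_mul, div_eq_mul_inv]
  rw [h1, zero_add, h2, h3, h4, ENNReal.toReal_ofReal (by positivity)]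

open Real Set in
lemma mgf_of_map_expMeasure {Ω : Type*} [MeasurableSpace Ω] (μ : Measure Ω)
    (f : Ω → ℝ) (hf : Measurable f) {r c : ℝ} (hr : 0 < r) (hc : 0 < c)
    (h : μ.map f = expMeasure r) :
    mgf f μ (-c) = 1 / (1 + c / r) := by
  have hcont : Continuous fun y : ℝ => exp (-c * y) := by fun_prop
  have : mgf f μ (-c) = ∫ y, exp (-c * y) ∂(μ.map f) := by
    rw [integral_map hf.aemeasurable hcont.aestronglyMeasurable]
    rfl
  rw [this, h]
  have : ∫ y, exp (-c * y) ∂(expMeasure r) = ∫ y, exp (-(c * y)) ∂(expMeasure r) := by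
    congr 1
    funext y
    rw [neg_mul]
  rw [this, integral_exp_expMeasure hr hc]
  field_simp

/-- If `x 0, ..., x (N-1)` are independent exponential random variables with positive
rates `lam i`, then `Pr(x 0 ≤ ∑_{i ≠ 0} x i) = 1 - ∏_{i ≠ 0} 1/(1 + lam 0 / lam i)`. -/
theorem outage_lemma
    {Ω : Type*} [MeasurableSpace Ω] (μ : Measure Ω) [IsProbabilityMeasure μ]
    (N : ℕ) (hN : 2 ≤ N) (x : Fin N → Ω → ℝ) (lam : Fin N → ℝ)
    (hlam : ∀ i, 0 < lam i)
    (hmeas : ∀ i, Measurable (x i))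
    (hdist : ∀ i, μ.map (x i) = expMeasure (lam i))
    (hindep : iIndepFun x μ) :
    μ {ω | x ⟨0, by omega⟩ ω ≤ ∑ i ∈ univ \ {⟨0, by omega⟩}, x i ω}
      = ENNReal.ofReal
          (1 - ∏ i ∈ univ \ {(⟨0, by omega⟩ : Fin N)},
              1 / (1 + lam ⟨0, by omega⟩ / lam i)) := by
  classical
  have hN0 : 0 < N := by omega
  set i0 : Fin N := ⟨0, hN0⟩ with hi0
  set s : Finset (Fin N) := univ \ {i0} with hs
  set S : Ω → ℝ := fun ω => ∑ i ∈ s, x i ω with hSdef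
  have hSeq : S = ∑ i ∈ s, x i := by
    funext ω; simp [hSdef, Finset.sum_apply]
  have hSmeas : Measurable S :=
    Finset.measurable_sum s fun i _ => hmeas i
  set P : ℝ := ∏ i ∈ s, 1 / (1 + lam i0 / lam i) with hP
  -- each x i is a.e. nonneg
  have hnn : ∀ i, ∀ᵐ ω ∂μ, 0 ≤ x i ω := fun i =>
    map_expMeasure_nonneg μ (x i) (hmeas i) (hdist i)
  have hSnn : ∀ᵐ ω ∂μ, 0 ≤ S ω := by
    have hall : ∀ᵐ ω ∂μ, ∀ i, 0 ≤ x i ω := ae_all_iff.2 hnn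
    filter_upwards [hall] with ω hω
    exact Finset.sum_nonneg fun i _ => hω i
  have hSnn' : ∀ᵐ b ∂(μ.map S), 0 ≤ b := by
    rw [ae_map_iff hSmeas.aemeasurable measurableSet_Ici]
    exact hSnn
  haveI : IsProbabilityMeasure (μ.map S) :=
    Measure.isProbabilityMeasure_map hSmeas.aemeasurable
  -- independence of x i0 and S
  have hi0s : i0 ∉ s := by simp [hs]
  have hXS : IndepFun (x i0) S μ := by
    rw [hSeq]
    exact (hindep.indepFun_finset_sum_of_notMem hmeas hi0s).symm
  have hsetm : MeasurableSet {p : ℝ × ℝ | p.1 ≤ p.2} :=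
    measurableSet_le measurable_fst measurable_snd
  have hmap : μ.map (fun ω => (x i0 ω, S ω)) = (μ.map (x i0)).prod (μ.map S) :=
    (indepFun_iff_map_prod_eq_prod_map_map (hmeas i0).aemeasurable
      hSmeas.aemeasurable).mp hXS
  -- the key transform: lintegral of exp(-lam i0 * b) over μ.map S equals ofReal P
  have hintS : Integrable (fun b => Real.exp (-(lam i0 * b))) (μ.map S) := by
    refine Integrable.mono' (integrable_const 1)
      (Continuous.aestronglyMeasurable (by fun_prop)) ?_
    filter_upwards [hSnn'] with b hb
    rw [Real.norm_eq_abs, abs_of_pos (Real.exp_pos _)]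
    exact Real.exp_le_one_iff.2 (by nlinarith [(hlam i0).le])
  have hmgf : ∫ b, Real.exp (-(lam i0 * b)) ∂(μ.map S) = P := by
    rw [integral_map hSmeas.aemeasurable
      (Continuous.aestronglyMeasurable (by fun_prop))]
    have : ∫ ω, Real.exp (-(lam i0 * S ω)) ∂μ = mgf (∑ i ∈ s, x i) μ (-lam i0) := by
      rw [mgf]
      congr 1
      funext ω
      simp only [hSdef, Finset.sum_apply, neg_mul]
    rw [this, hindep.mgf_sum hmeas s, hP]
    exact Finset.prod_congr rfl fun i _ =>
      mgf_of_map_expMeasure μ (x i) (hmeas i) (hlam i) (hlam i0) (hdist i)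
  have hkey : ∫⁻ b, ENNReal.ofReal (Real.exp (-(lam i0 * b))) ∂(μ.map S)
      = ENNReal.ofReal P := by
    rw [← ofReal_integral_eq_lintegral_ofReal hintS
      (ae_of_all _ fun b => (Real.exp_pos _).le), hmgf]
  -- bounds on P
  have hPfac : ∀ i ∈ s, 0 ≤ 1 / (1 + lam i0 / lam i) ∧ 1 / (1 + lam i0 / lam i) ≤ 1 := by
    intro i _
    have h1 : 0 < lam i0 / lam i := div_pos (hlam i0) (hlam i)
    constructor
    · positivity
    · rw [div_le_one (by linarith)]
      linarith
  have hP0 : 0 ≤ P := Finset.prod_nonneg fun i hi => (hPfac i hi).1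
  have hP1 : P ≤ 1 := Finset.prod_le_one (fun i hi => (hPfac i hi).1)
    (fun i hi => (hPfac i hi).2)
  -- main computation
  show μ {ω | x i0 ω ≤ S ω} = ENNReal.ofReal (1 - P)
  have step1 : μ {ω | x i0 ω ≤ S ω}
      = ((μ.map (x i0)).prod (μ.map S)) {p : ℝ × ℝ | p.1 ≤ p.2} := by
    rw [← hmap, Measure.map_apply ((hmeas i0).prodMk hSmeas) hsetm]
    rfl
  rw [step1, Measure.prod_apply_symm hsetm]
  have step2 : ∫⁻ b, (μ.map (x i0)) ((fun a => (a, b)) ⁻¹' {p : ℝ × ℝ | p.1 ≤ p.2}) ∂(μ.map S)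
      = ∫⁻ b, (1 - ENNReal.ofReal (Real.exp (-(lam i0 * b)))) ∂(μ.map S) := by
    refine lintegral_congr_ae ?_
    filter_upwards [hSnn'] with b hb
    have hpre : ((fun a => (a, b)) ⁻¹' {p : ℝ × ℝ | p.1 ≤ p.2}) = Set.Iic b := rfl
    rw [hpre, hdist i0, expMeasure_apply_Iic (hlam i0) hb,
      ENNReal.ofReal_sub _ (Real.exp_pos _).le, ENNReal.ofReal_one]
  rw [step2]
  have hgmeas : Measurable fun b => ENNReal.ofReal (Real.exp (-(lam i0 * b))) :=
    ENNReal.measurable_ofReal.comp (by fun_prop)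
  have hgfin : ∫⁻ b, ENNReal.ofReal (Real.exp (-(lam i0 * b))) ∂(μ.map S) ≠ ⊤ := by
    rw [hkey]; exact ENNReal.ofReal_ne_top
  have hgle : (fun b => ENNReal.ofReal (Real.exp (-(lam i0 * b))))
      ≤ᵐ[μ.map S] fun _ => (1 : ENNReal) := by
    filter_upwards [hSnn'] with b hb
    calc ENNReal.ofReal (Real.exp (-(lam i0 * b)))
        ≤ ENNReal.ofReal 1 := ENNReal.ofReal_le_ofReal
          (Real.exp_le_one_iff.2 (by nlinarith [(hlam i0).le]))
      _ = 1 := ENNReal.ofReal_one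
  rw [lintegral_sub hgmeas hgfin hgle, lintegral_one, measure_univ, hkey,
    ENNReal.ofReal_sub _ hP0, ENNReal.ofReal_one]
end

section
/- For powers p₁, ..., p_K > 0, the outage constraint Pr(γ̃_k ≤ γ₀) ≤ p₀ (with 0 < p₀ < 1, squared channel gains unit-rate exponential) is equivalent to the inequality (1 - p₀) ∏_{j≠k} (1 + γ₀ p_j / p_k) ≤ 1. -/
open MeasureTheory ProbabilityTheory Finset Real Set

lemma expMeasure_one_eq : expMeasure 1 = volume.withDensity (exponentialPDF 1) := rfl

lemma expMeasure_one_Iic (x : ℝ) :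
    expMeasure 1 (Iic x) = ENNReal.ofReal (if 0 ≤ x then 1 - Real.exp (-(1 * x)) else 0) := by
  rw [expMeasure_one_eq, withDensity_apply _ measurableSet_Iic,
    lintegral_exponentialPDF_eq_antiDeriv one_pos x]

lemma lintegral_exp_neg_expMeasure {a : ℝ} (ha : 0 ≤ a) :
    ∫⁻ x, ENNReal.ofReal (Real.exp (-(a * x))) ∂(expMeasure 1)
      = ENNReal.ofReal (1 / (1 + a)) := by
  have hb : (0:ℝ) < 1 + a := by linarith
  have hpdf : Measurable (exponentialPDF 1) := (measurable_exponentialPDFReal 1).ennreal_ofReal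
  have hf : Measurable fun x : ℝ => ENNReal.ofReal (Real.exp (-(a * x))) :=
    ENNReal.measurable_ofReal.comp (Real.measurable_exp.comp (measurable_const_mul a).neg)
  rw [expMeasure_one_eq, lintegral_withDensity_eq_lintegral_mul _ hpdf hf]
  rw [← lintegral_add_compl
    (fun x => (exponentialPDF 1 * fun x => ENNReal.ofReal (Real.exp (-(a * x)))) x)
    (measurableSet_Iio (a := (0:ℝ)))]
  have h1 : ∫⁻ x in Iio (0:ℝ),
      (exponentialPDF 1 * fun x => ENNReal.ofReal (Real.exp (-(a * x)))) x = 0 := by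
    rw [setLIntegral_congr_fun (g := fun _ => 0) measurableSet_Iio
      (fun x (hx : x < 0) => by
        simp [Pi.mul_apply, exponentialPDF_of_neg hx])]
    simp
  rw [h1, zero_add, compl_Iio]
  have h2 : ∫⁻ x in Ici (0:ℝ),
      (exponentialPDF 1 * fun x => ENNReal.ofReal (Real.exp (-(a * x)))) x
      = ∫⁻ x in Ioi (0:ℝ), ENNReal.ofReal (Real.exp (-((1 + a) * x))) := by
    rw [setLIntegral_congr (Ioi_ae_eq_Ici (a := (0:ℝ))).symm]
    refine setLIntegral_congr_fun measurableSet_Ioi (fun x (hx : 0 < x) => ?_)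
    rw [Pi.mul_apply, exponentialPDF_of_nonneg hx.le, one_mul, ← ENNReal.ofReal_mul (by positivity),
      ← Real.exp_add]
    ring_nf
  rw [h2]
  have hInt : IntegrableOn (fun x => Real.exp (-((1 + a) * x))) (Ioi (0:ℝ)) := by
    exact (exp_neg_integrableOn_Ioi (0:ℝ) hb).congr_fun
      (fun x _ => by simp only [neg_mul]) measurableSet_Ioi
  rw [← ofReal_integral_eq_lintegral_ofReal hInt (ae_of_all _ fun x => (Real.exp_pos _).le)]
  congr 1
  have := integral_comp_mul_left_Ioi (fun x => Real.exp (-x)) 0 hb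
  simp only [mul_zero] at this
  rw [show (fun x => Real.exp (-((1+a)*x))) = (fun x : ℝ => Real.exp (-((1+a)*x))) from rfl]
  calc ∫ x in Ioi (0:ℝ), Real.exp (-((1 + a) * x)) = (1+a)⁻¹ • ∫ x in Ioi (0:ℝ), Real.exp (-x) := this
    _ = 1 / (1 + a) := by rw [integral_exp_neg_Ioi_zero]; simp [one_div]

lemma lintegral_finset_prod_comp {Ω ι : Type*} [MeasurableSpace Ω] {μ : Measure Ω}
    [IsProbabilityMeasure μ] {g : ι → Ω → ℝ}
    (hindep : iIndepFun g μ)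
    (hmeas : ∀ i, Measurable (g i)) (φ : ι → ℝ → ENNReal) (hφ : ∀ i, Measurable (φ i))
    (S : Finset ι) :
    ∫⁻ ω, ∏ j ∈ S, φ j (g j ω) ∂μ = ∏ j ∈ S, ∫⁻ ω, φ j (g j ω) ∂μ := by
  classical
  induction S using Finset.induction_on with
  | empty => simp
  | @insert i S hiS ih =>
    simp only [Finset.prod_insert hiS]
    have hind : IndepFun (fun ω => φ i (g i ω)) (fun ω => ∏ j ∈ S, φ j (g j ω)) μ := by
      have h := hindep.indepFun_finset {i} S (by simp [Finset.disjoint_left, hiS]) hmeas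
      have h2 := h.comp
        (φ := fun v : ({i} : Finset ι) → ℝ => φ i (v ⟨i, Finset.mem_singleton_self i⟩))
        (ψ := fun v : {x // x ∈ S} → ℝ => ∏ j : {x // x ∈ S}, φ j.1 (v j))
        ((hφ i).comp (measurable_pi_apply _))
        (Finset.measurable_prod _ fun j _ => (hφ j).comp (measurable_pi_apply _))
      have e : ((fun v : {x // x ∈ S} → ℝ => ∏ j : {x // x ∈ S}, φ j.1 (v j)) ∘
          (fun a (i : {x // x ∈ S}) => g i.1 a)) = fun ω => ∏ j ∈ S, φ j (g j ω) := by
        funext ω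
        exact Finset.prod_attach S fun j => φ j (g j ω)
      rw [e] at h2
      exact h2
    have := lintegral_mul_eq_lintegral_mul_lintegral_of_indepFun
      (μ := μ) (f := fun ω => φ i (g i ω)) (g := fun ω => ∏ j ∈ S, φ j (g j ω))
      ((hφ i).comp (hmeas i))
      (Finset.measurable_prod _ fun j _ => (hφ j).comp (hmeas j)) hind
    rw [← ih]
    exact this
/-- For positive powers, the probabilistic outage constraint `Pr(γ̃_k ≤ γ₀) ≤ p₀`
(interference-limited SINR, i.i.d. unit-rate exponential squared channel gains)
is equivalent to `(1 - p₀) ∏_{j ≠ k} (1 + γ₀ p j / p k) ≤ 1`. -/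
theorem outage_constraint_equiv
    {Ω : Type*} [MeasurableSpace Ω] (μ : Measure Ω) [IsProbabilityMeasure μ]
    (K : ℕ) (hK : 2 ≤ K) (k : Fin K) (g : Fin K → Ω → ℝ) (p : Fin K → ℝ)
    (γ₀ p₀ : ℝ) (hp : ∀ j, 0 < p j) (hγ₀ : 0 < γ₀) (hp₀ : 0 < p₀) (hp₀' : p₀ < 1)
    (hmeas : ∀ j, Measurable (g j))
    (hdist : ∀ j, μ.map (g j) = expMeasure 1)
    (hindep : iIndepFun g μ) :
    μ {ω | g k ω * p k / (∑ j ∈ univ \ {k}, g j ω * p j) ≤ γ₀} ≤ ENNReal.ofReal p₀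
      ↔ (1 - p₀) * ∏ j ∈ univ \ {k}, (1 + γ₀ * p j / p k) ≤ 1 := by
  classical
  haveI : IsProbabilityMeasure (expMeasure 1) := isProbabilityMeasure_expMeasure one_pos
  set S : Finset (Fin K) := univ \ {k} with hS
  have hkS : k ∉ S := by simp [hS]
  have hSne : S.Nonempty := by
    haveI : Nontrivial (Fin K) := Fin.nontrivial_iff_two_le.mpr hK
    obtain ⟨j, hj⟩ := exists_ne k
    exact ⟨j, by simp [hS, hj]⟩
  set c : ℝ := γ₀ / p k with hc
  have hcpos : 0 < c := div_pos hγ₀ (hp k)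
  set T : Ω → ℝ := fun ω => ∑ j ∈ S, g j ω * p j with hTdef
  have hT : Measurable T := Finset.measurable_sum _ fun j _ => (hmeas j).mul_const _
  -- a.e. positivity
  have hpos : ∀ᵐ ω ∂μ, ∀ j, 0 < g j ω := by
    rw [ae_all_iff]
    intro j
    have h0 : μ {ω | g j ω ≤ 0} = 0 := by
      have : μ {ω | g j ω ≤ 0} = (μ.map (g j)) (Set.Iic 0) := by
        rw [Measure.map_apply (hmeas j) measurableSet_Iic]; rfl
      rw [this, hdist j, expMeasure_one_Iic]
      simp
    rw [ae_iff]
    convert h0 using 2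
    ext ω; simp [not_lt]
  have hTpos : ∀ᵐ ω ∂μ, 0 < T ω := by
    filter_upwards [hpos] with ω hω
    exact Finset.sum_pos (fun j _ => mul_pos (hω j) (hp j)) hSne
  -- rewrite the event
  have hEq : {ω | g k ω * p k / T ω ≤ γ₀} =ᵐ[μ] {ω | g k ω ≤ c * T ω} := by
    rw [Filter.eventuallyEq_set]
    filter_upwards [hTpos] with ω hω
    show (g k ω * p k / T ω ≤ γ₀) ↔ (g k ω ≤ c * T ω)
    rw [div_le_iff₀ hω, hc, div_mul_eq_mul_div, le_div_iff₀ (hp k)]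
  -- independence of g k and T
  have hIndep : IndepFun (g k) T μ := by
    have h := hindep.indepFun_finset {k} S (by simp [Finset.disjoint_left, hkS]) hmeas
    have h2 := h.comp
      (φ := fun v : ({k} : Finset (Fin K)) → ℝ => v ⟨k, Finset.mem_singleton_self k⟩)
      (ψ := fun v : {x // x ∈ S} → ℝ => ∑ j : {x // x ∈ S}, v j * p j.1)
      (measurable_pi_apply _ :
        Measurable fun v : ({k} : Finset (Fin K)) → ℝ => v ⟨k, Finset.mem_singleton_self k⟩)
      (Finset.measurable_sum _ fun j _ => (measurable_pi_apply j).mul measurable_const)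
    have e : ((fun v : {x // x ∈ S} → ℝ => ∑ j : {x // x ∈ S}, v j * p j.1) ∘
        (fun a (i : {x // x ∈ S}) => g i.1 a)) = T := by
      funext ω
      exact Finset.sum_attach S fun j => g j ω * p j
    rw [e] at h2
    exact h2
  have hν : IsProbabilityMeasure (μ.map T) := Measure.isProbabilityMeasure_map hT.aemeasurable
  have hmap : μ.map (fun ω => (g k ω, T ω)) = (expMeasure 1).prod (μ.map T) := by
    rw [← hdist k]
    exact (indepFun_iff_map_prod_eq_prod_map_map (hmeas k).aemeasurable hT.aemeasurable).mp hIndep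
  have hνpos : ∀ᵐ y ∂(μ.map T), 0 < y := by
    rw [ae_map_iff hT.aemeasurable measurableSet_Ioi]
    exact hTpos
  -- compute the probability
  have hsetm : MeasurableSet {q : ℝ × ℝ | q.1 ≤ c * q.2} :=
    measurableSet_le measurable_fst (measurable_snd.const_mul c)
  have hI : ∀ j ∈ S, ∫⁻ ω, ENNReal.ofReal (Real.exp (-(c * p j * g j ω))) ∂μ
      = ENNReal.ofReal (1 / (1 + c * p j)) := by
    intro j _
    have hφm : Measurable fun x : ℝ => ENNReal.ofReal (Real.exp (-(c * p j * x))) :=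
      ENNReal.measurable_ofReal.comp (Real.measurable_exp.comp (measurable_const_mul _).neg)
    rw [← lintegral_map hφm (hmeas j), hdist j,
      lintegral_exp_neg_expMeasure (mul_pos hcpos (hp j)).le]
  have hμE : μ {ω | g k ω * p k / T ω ≤ γ₀}
      = 1 - ENNReal.ofReal (∏ j ∈ S, (1 / (1 + c * p j))) := by
    rw [measure_congr hEq]
    have h1 : {ω | g k ω ≤ c * T ω} = (fun ω => (g k ω, T ω)) ⁻¹' {q : ℝ × ℝ | q.1 ≤ c * q.2} :=
      rfl
    rw [h1, ← Measure.map_apply ((hmeas k).prodMk hT) hsetm, hmap,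
      Measure.prod_apply_symm hsetm]
    have h2 : ∀ᵐ y ∂(μ.map T),
        expMeasure 1 ((fun x => (x, y)) ⁻¹' {q : ℝ × ℝ | q.1 ≤ c * q.2})
          = 1 - ENNReal.ofReal (Real.exp (-(c * y))) := by
      filter_upwards [hνpos] with y hy
      have : ((fun x => (x, y)) ⁻¹' {q : ℝ × ℝ | q.1 ≤ c * q.2}) = Set.Iic (c * y) := rfl
      rw [this, expMeasure_one_Iic, if_pos (mul_pos hcpos hy).le, one_mul,
        ENNReal.ofReal_sub _ (Real.exp_pos _).le, ENNReal.ofReal_one]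
    rw [lintegral_congr_ae h2]
    have hfm : Measurable fun y : ℝ => ENNReal.ofReal (Real.exp (-(c * y))) :=
      ENNReal.measurable_ofReal.comp (Real.measurable_exp.comp (measurable_const_mul _).neg)
    have hle : (fun y : ℝ => ENNReal.ofReal (Real.exp (-(c * y)))) ≤ᵐ[μ.map T] fun _ => 1 := by
      filter_upwards [hνpos] with y hy
      simp only [← ENNReal.ofReal_one]
      exact ENNReal.ofReal_le_ofReal (Real.exp_le_one_iff.mpr (by nlinarith [mul_pos hcpos hy]))
    have hfin : ∫⁻ y, ENNReal.ofReal (Real.exp (-(c * y))) ∂(μ.map T) ≠ ⊤ := by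
      have hb : ∫⁻ y, ENNReal.ofReal (Real.exp (-(c * y))) ∂(μ.map T) ≤ 1 := by
        calc ∫⁻ y, ENNReal.ofReal (Real.exp (-(c * y))) ∂(μ.map T)
            ≤ ∫⁻ _, 1 ∂(μ.map T) := lintegral_mono_ae hle
          _ = 1 := by simp
      exact (lt_of_le_of_lt hb ENNReal.one_lt_top).ne
    rw [lintegral_sub hfm hfin hle, lintegral_one, measure_univ]
    congr 1
    -- the Laplace transform term
    rw [lintegral_map hfm hT]
    have h3 : ∀ ω, ENNReal.ofReal (Real.exp (-(c * T ω)))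
        = ∏ j ∈ S, ENNReal.ofReal (Real.exp (-(c * p j * g j ω))) := by
      intro ω
      rw [← ENNReal.ofReal_prod_of_nonneg (fun j _ => (Real.exp_pos _).le), ← Real.exp_sum]
      congr 2
      rw [hTdef, Finset.mul_sum, ← Finset.sum_neg_distrib]
      exact Finset.sum_congr rfl fun j _ => by ring
    simp_rw [h3]
    rw [lintegral_finset_prod_comp hindep hmeas
      (fun j x => ENNReal.ofReal (Real.exp (-(c * p j * x))))
      (fun j => ENNReal.measurable_ofReal.comp (Real.measurable_exp.comp
        (measurable_const_mul _).neg)) S]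
    rw [ENNReal.ofReal_prod_of_nonneg
      (fun j _ => one_div_nonneg.mpr (by nlinarith [mul_pos hcpos (hp j)]))]
    exact Finset.prod_congr rfl hI
  -- final arithmetic
  set r : ℝ := ∏ j ∈ S, (1 + c * p j) with hr
  have hrpos : 0 < r := by
    rw [hr]
    refine Finset.prod_pos fun j _ => ?_
    nlinarith [mul_pos hcpos (hp j)]
  have hrone : 1 ≤ r := by
    rw [hr]
    calc (1:ℝ) = ∏ _j ∈ S, 1 := by simp
      _ ≤ ∏ j ∈ S, (1 + c * p j) :=
        Finset.prod_le_prod (fun j _ => zero_le_one)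
          (fun j _ => by nlinarith [mul_pos hcpos (hp j)])
  have hprod : ∏ j ∈ S, (1 / (1 + c * p j)) = 1 / r := by
    rw [hr]
    simp only [one_div]
    exact Finset.prod_inv_distrib _
  have hrtarget : r = ∏ j ∈ S, (1 + γ₀ * p j / p k) := by
    refine Finset.prod_congr rfl fun j _ => ?_
    rw [hc, div_mul_eq_mul_div]
  have hμE' : μ {ω | g k ω * p k / T ω ≤ γ₀} = ENNReal.ofReal (1 - 1 / r) := by
    rw [hμE, hprod, ENNReal.ofReal_sub _ (one_div_nonneg.mpr hrpos.le), ENNReal.ofReal_one]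
  rw [show {ω | g k ω * p k / (∑ j ∈ S, g j ω * p j) ≤ γ₀}
      = {ω | g k ω * p k / T ω ≤ γ₀} from rfl,
    hμE', ← hrtarget, ENNReal.ofReal_le_ofReal_iff hp₀.le]
  have hrne : r ≠ 0 := hrpos.ne'
  constructor
  · intro h
    have h2 : 1 - p₀ ≤ 1 / r := by linarith
    exact (le_div_iff₀ hrpos).mp h2
  · intro h
    have h2 : 1 - p₀ ≤ 1 / r := (le_div_iff₀ hrpos).mpr h
    linarith
end
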